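/- Apply the dqd transform (shift 0) to a positive n×n upper bidiagonal matrix B with intermediate values d_1,…,d_n, and let d_min = min_k d_k and σ = σ_min(B) the smallest singular value of B. Then (1/n)·d_min ≤ σ² ≤ d_min ≤ n·σ². -/

import Mathlib

open Matrix

/-- The `n×n` upper bidiagonal matrix with diagonal `a` and superdiagonal `b`. -/
def upperBidiagonal (n : ℕ) (a b : ℕ → ℝ) : Matrix (Fin n) (Fin n) ℝ :=
  Matrix.of fun i j => if (j : ℕ) = (i : ℕ) then a i
    else if (j : ℕ) = (i : ℕ) + 1 then b i else 0

namespace DqdAux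

lemma sum_ite_nat_eq {n : ℕ} (m : ℕ) (g : Fin n → ℝ) :
    (∑ j : Fin n, if (j : ℕ) = m then g j else 0) = if h : m < n then g ⟨m, h⟩ else 0 := by
  by_cases h : m < n
  · rw [dif_pos h, Finset.sum_eq_single (⟨m, h⟩ : Fin n)]
    · simp
    · intro j _ hj
      rw [if_neg]
      exact fun hc => hj (Fin.ext hc)
    · simp
  · rw [dif_neg h, Finset.sum_eq_zero]
    intro j _
    rw [if_neg]
    exact fun hc => h (hc ▸ j.isLt)

lemma upperBidiagonal_mulVec {n : ℕ} (a b : ℕ → ℝ) (w : Fin n → ℝ) (i : Fin n) :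
    (upperBidiagonal n a b *ᵥ w) i
      = a i * w i + (if h : (i : ℕ) + 1 < n then b i * w ⟨(i : ℕ) + 1, h⟩ else 0) := by
  have key : ∀ j : Fin n, upperBidiagonal n a b i j * w j
      = (if (j : ℕ) = (i : ℕ) then a (i : ℕ) * w j else 0)
        + (if (j : ℕ) = (i : ℕ) + 1 then b (i : ℕ) * w j else 0) := by
    intro j
    simp only [upperBidiagonal, of_apply]
    by_cases h1 : (j : ℕ) = (i : ℕ) <;> by_cases h2 : (j : ℕ) = (i : ℕ) + 1 <;>
      simp [h1, h2] <;> omega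
  show (∑ j, upperBidiagonal n a b i j * w j) = _
  rw [Finset.sum_congr rfl (fun j _ => key j), Finset.sum_add_distrib,
    sum_ite_nat_eq, sum_ite_nat_eq, dif_pos i.isLt]

lemma upperBidiagonal_transpose_mulVec {n : ℕ} (a b : ℕ → ℝ) (w : Fin n → ℝ) (i : Fin n) :
    ((upperBidiagonal n a b)ᵀ *ᵥ w) i
      = a i * w i + (if h : 0 < (i : ℕ) then
          b ((i : ℕ) - 1) * w ⟨(i : ℕ) - 1, Nat.lt_of_le_of_lt (Nat.sub_le _ _) i.isLt⟩
        else 0) := by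
  have key : ∀ j : Fin n, (upperBidiagonal n a b)ᵀ i j * w j
      = (if (j : ℕ) = (i : ℕ) then a ((j : ℕ)) * w j else 0)
        + (if (j : ℕ) + 1 = (i : ℕ) then b ((j : ℕ)) * w j else 0) := by
    intro j
    simp only [transpose_apply, upperBidiagonal, of_apply]
    rcases eq_or_ne ((i : ℕ)) ((j : ℕ)) with h1 | h1
    · rw [if_pos h1, if_pos h1.symm, if_neg (by omega), add_zero]
    · rw [if_neg h1]
      by_cases h2 : (j : ℕ) + 1 = (i : ℕ)
      · rw [if_pos (by omega : (i:ℕ) = (j:ℕ) + 1), if_neg (fun hc : (j:ℕ) = (i:ℕ) => h1 hc.symm),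
          if_pos h2, zero_add]
      · rw [if_neg (by omega), if_neg (fun hc : (j:ℕ) = (i:ℕ) => h1 hc.symm), if_neg h2,
          zero_mul, add_zero]
  have h2sum : (∑ j : Fin n, if (j : ℕ) + 1 = (i : ℕ) then b ((j : ℕ)) * w j else 0)
      = (if h : 0 < (i : ℕ) then
          b ((i : ℕ) - 1) * w ⟨(i : ℕ) - 1, Nat.lt_of_le_of_lt (Nat.sub_le _ _) i.isLt⟩
        else 0) := by
    by_cases h : 0 < (i : ℕ)
    · rw [Finset.sum_congr rfl
        (fun (j : Fin n) _ => if_congr (by omega : ((j:ℕ)+1 = (i:ℕ)) ↔ ((j:ℕ) = (i:ℕ)-1)) rfl rfl),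
        sum_ite_nat_eq, dif_pos (Nat.lt_of_le_of_lt (Nat.sub_le _ _) i.isLt), dif_pos h]
    · rw [dif_neg h, Finset.sum_eq_zero]
      intro j _
      rw [if_neg (by omega)]
  show (∑ j, (upperBidiagonal n a b)ᵀ i j * w j) = _
  rw [Finset.sum_congr rfl (fun j _ => key j), Finset.sum_add_distrib,
    sum_ite_nat_eq, dif_pos i.isLt, h2sum]


noncomputable def yvec (a b : ℕ → ℝ) (k i : ℕ) : ℝ :=
  if i ≤ k then (∏ j ∈ Finset.Ico i k, (-(b j) / a j)) / a k else 0

lemma yvec_self (a b : ℕ → ℝ) (k : ℕ) : yvec a b k k = 1 / a k := by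
  simp [yvec]

lemma yvec_of_gt (a b : ℕ → ℝ) {k i : ℕ} (h : k < i) : yvec a b k i = 0 := by
  simp [yvec, Nat.not_le.2 h]

lemma yvec_step (a b : ℕ → ℝ) {k i : ℕ} (h : i < k) :
    yvec a b k i = (-(b i) / a i) * yvec a b k (i + 1) := by
  rw [yvec, yvec, if_pos (by omega), if_pos (by omega),
    Finset.prod_eq_prod_Ico_succ_bot h]
  ring

lemma yvec_succ_k (a b : ℕ → ℝ) {k i : ℕ} (h : i ≤ k) (hak : a k ≠ 0) :
    yvec a b (k + 1) i = (-(b k) / a (k + 1)) * yvec a b k i := by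
  rw [yvec, yvec, if_pos (by omega), if_pos h, Finset.prod_Ico_succ_top h]
  field_simp

lemma mulVec_yvec {n : ℕ} (a b : ℕ → ℝ) (ha : ∀ j, j < n → a j ≠ 0) (k : ℕ) (hk : k < n) :
    (upperBidiagonal n a b *ᵥ fun i : Fin n => yvec a b k (i : ℕ))
      = fun i : Fin n => if (i : ℕ) = k then 1 else 0 := by
  funext i
  rw [upperBidiagonal_mulVec]
  rcases lt_trichotomy ((i : ℕ)) k with h | h | h
  · rw [if_neg (by omega), dif_pos (by omega : (i : ℕ) + 1 < n)]
    show a (i:ℕ) * yvec a b k (i:ℕ) + b (i:ℕ) * yvec a b k ((i:ℕ)+1) = 0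
    rw [yvec_step a b h]
    have hai : a (i : ℕ) ≠ 0 := ha _ i.isLt
    field_simp
    ring
  · rw [if_pos h]
    have h2 : (if h' : (i : ℕ) + 1 < n then b (i:ℕ) * yvec a b k ((⟨(i:ℕ)+1, h'⟩ : Fin n) : ℕ) else 0) = 0 := by
      split
      · show b (i:ℕ) * yvec a b k ((i:ℕ)+1) = 0
        rw [yvec_of_gt a b (by omega), mul_zero]
      · rfl
    rw [h2, add_zero, h, yvec_self]
    field_simp [ha k hk]
  · have h2 : (if h' : (i : ℕ) + 1 < n then b (i:ℕ) * yvec a b k ((⟨(i:ℕ)+1, h'⟩ : Fin n) : ℕ) else 0) = 0 := by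
      split
      · show b (i:ℕ) * yvec a b k ((i:ℕ)+1) = 0
        rw [yvec_of_gt a b (by omega), mul_zero]
      · rfl
    rw [if_neg (by omega), h2, add_zero, yvec_of_gt a b h, mul_zero]

lemma d_pos_and_sum (n : ℕ) (a b d : ℕ → ℝ)
    (ha : ∀ k < n, 0 < a k) (hb : ∀ k, k + 1 < n → 0 < b k)
    (hd1 : d 0 = (a 0) ^ 2)
    (hdk : ∀ k, k + 1 < n → d (k + 1) = d k * (a (k + 1)) ^ 2 / (d k + (b k) ^ 2)) :
    ∀ k, k < n → 0 < d k ∧ (∑ i ∈ Finset.range (k + 1), (yvec a b k i) ^ 2) = 1 / d k := by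
  intro k
  induction k with
  | zero =>
    intro hk
    have ha0 : 0 < a 0 := ha 0 hk
    constructor
    · rw [hd1]; positivity
    · rw [hd1]
      simp [yvec_self]
  | succ k ih =>
    intro hk
    obtain ⟨hdkpos, hsum⟩ := ih (by omega)
    have hak1 : 0 < a (k + 1) := ha _ hk
    have hak : 0 < a k := ha _ (by omega)
    have hbk : 0 < b k := hb _ hk
    have hdenom : 0 < d k + (b k) ^ 2 := by positivity
    have hdsucc : d (k + 1) = d k * (a (k + 1)) ^ 2 / (d k + (b k) ^ 2) := hdk _ hk
    have hpos : 0 < d (k + 1) := by rw [hdsucc]; positivity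
    refine ⟨hpos, ?_⟩
    rw [Finset.sum_range_succ]
    have hstep : ∀ i ∈ Finset.range (k + 1), (yvec a b (k+1) i) ^ 2
        = (b k)^2 / (a (k+1))^2 * (yvec a b k i) ^ 2 := by
      intro i hi
      rw [yvec_succ_k a b (by simp at hi; omega) hak.ne']
      rw [mul_pow, div_pow, neg_pow]
      ring
    rw [Finset.sum_congr rfl hstep, ← Finset.mul_sum, hsum, yvec_self, hdsucc]
    field_simp
    ring

noncomputable def vvec (a b : ℕ → ℝ) (k : ℕ) : ℕ → ℝ
  | 0 => yvec a b k 0 / a 0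
  | i + 1 => (yvec a b k (i + 1) - b i * vvec a b k i) / a (i + 1)

lemma transpose_mulVec_vvec {n : ℕ} (a b : ℕ → ℝ) (ha : ∀ j, j < n → a j ≠ 0) (k : ℕ) :
    ((upperBidiagonal n a b)ᵀ *ᵥ fun i : Fin n => vvec a b k (i : ℕ))
      = fun i : Fin n => yvec a b k (i : ℕ) := by
  funext i
  rw [upperBidiagonal_transpose_mulVec]
  by_cases h : 0 < (i : ℕ)
  · rw [dif_pos h]
    obtain ⟨m, hm⟩ : ∃ m, (i : ℕ) = m + 1 := ⟨(i : ℕ) - 1, by omega⟩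
    have hin := i.isLt
    show a (i:ℕ) * vvec a b k (i:ℕ) + b ((i:ℕ)-1) * vvec a b k ((i:ℕ)-1) = yvec a b k (i:ℕ)
    rw [hm, Nat.add_sub_cancel,
      show vvec a b k (m+1) = (yvec a b k (m + 1) - b m * vvec a b k m) / a (m + 1) from rfl]
    have ham : a (m + 1) ≠ 0 := ha _ (hm ▸ hin)
    field_simp
    ring
  · have h0 : (i : ℕ) = 0 := by omega
    rw [dif_neg h, add_zero]
    show a (i:ℕ) * vvec a b k (i:ℕ) = yvec a b k (i:ℕ)
    rw [h0, show vvec a b k 0 = yvec a b k 0 / a 0 from rfl]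
    have ha0 : a 0 ≠ 0 := ha 0 (h0 ▸ i.isLt)
    field_simp


lemma rayleigh_lower {n : ℕ} {M : Matrix (Fin n) (Fin n) ℝ} (hn : 0 < n)
    (hM : M.IsHermitian) (x : Fin n → ℝ) :
    (⨅ i, hM.eigenvalues i) * (x ⬝ᵥ x) ≤ x ⬝ᵥ (M *ᵥ x) := by
  haveI : Nonempty (Fin n) := ⟨⟨0, hn⟩⟩
  set U : Matrix (Fin n) (Fin n) ℝ := ↑(hM.eigenvectorUnitary) with hUdef
  have hstar : star U = Uᵀ := by
    rw [Matrix.star_eq_conjTranspose, Matrix.conjTranspose_eq_transpose_of_trivial]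
  have hUU : U * Uᵀ = 1 := by
    rw [← hstar]
    exact Matrix.mem_unitaryGroup_iff.mp hM.eigenvectorUnitary.2
  have hspec : M = U * Matrix.diagonal hM.eigenvalues * Uᵀ := by
    have h := hM.spectral_theorem
    rw [Unitary.conjStarAlgAut_apply] at h; rw [← hstar]; exact h
  set z : Fin n → ℝ := Uᵀ *ᵥ x with hz
  have hvm : x ᵥ* U = z := by
    rw [hz, ← Matrix.transpose_transpose U, Matrix.vecMul_transpose, Matrix.transpose_transpose]
  have hzz : z ⬝ᵥ z = x ⬝ᵥ x := by
    calc z ⬝ᵥ z = (z ᵥ* Uᵀ) ⬝ᵥ x := by rw [hz, dotProduct_mulVec]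
    _ = (U *ᵥ z) ⬝ᵥ x := by rw [vecMul_transpose]
    _ = ((U * Uᵀ) *ᵥ x) ⬝ᵥ x := by rw [hz, mulVec_mulVec]
    _ = x ⬝ᵥ x := by rw [hUU, one_mulVec]
  have hMx : x ⬝ᵥ (M *ᵥ x) = ∑ i, hM.eigenvalues i * z i ^ 2 := by
    conv_lhs => rw [hspec, ← mulVec_mulVec, ← mulVec_mulVec, dotProduct_mulVec, hvm]
    rw [dotProduct_mulVec z (Matrix.diagonal hM.eigenvalues)]
    rw [show z ᵥ* Matrix.diagonal hM.eigenvalues = fun i => hM.eigenvalues i * z i from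
      funext fun i => by rw [Matrix.vecMul_diagonal]; ring]
    rw [dotProduct]
    exact Finset.sum_congr rfl fun i _ => by ring
  have hmu : ∀ i, (⨅ j, hM.eigenvalues j) ≤ hM.eigenvalues i := fun i =>
    ciInf_le ((Set.finite_range _).bddBelow) i
  calc (⨅ i, hM.eigenvalues i) * (x ⬝ᵥ x)
      = ∑ i, (⨅ j, hM.eigenvalues j) * z i ^ 2 := by
        rw [← hzz, dotProduct, Finset.mul_sum]
        exact Finset.sum_congr rfl fun i _ => by ring
    _ ≤ ∑ i, hM.eigenvalues i * z i ^ 2 :=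
        Finset.sum_le_sum fun i _ => mul_le_mul_of_nonneg_right (hmu i) (sq_nonneg _)
    _ = x ⬝ᵥ (M *ᵥ x) := hMx.symm

end DqdAux

open DqdAux

/-- `(1/n)·d_min ≤ σ_min(B)² ≤ d_min ≤ n·σ_min(B)²` where `σ_min(B)²` is the
smallest eigenvalue of `B*Bᵀ` and `d_min = min_k d_k`. -/
theorem dqd_dmin_bounds (n : ℕ) (hn : 0 < n) (a b d : ℕ → ℝ)
    (ha : ∀ k < n, 0 < a k) (hb : ∀ k, k + 1 < n → 0 < b k)
    (hd1 : d 0 = (a 0) ^ 2)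
    (hdk : ∀ k, k + 1 < n → d (k + 1) = d k * (a (k + 1)) ^ 2 / (d k + (b k) ^ 2))
    (hM : (upperBidiagonal n a b * (upperBidiagonal n a b)ᵀ).IsHermitian) :
    (1 / (n : ℝ)) * (⨅ k : Fin n, d (k : ℕ)) ≤ (⨅ i, hM.eigenvalues i) ∧
      (⨅ i, hM.eigenvalues i) ≤ (⨅ k : Fin n, d (k : ℕ)) ∧
      (⨅ k : Fin n, d (k : ℕ)) ≤ (n : ℝ) * ⨅ i, hM.eigenvalues i := by
  classical
  haveI : Nonempty (Fin n) := ⟨⟨0, hn⟩⟩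
  set B := upperBidiagonal n a b with hB
  set μ := ⨅ i, hM.eigenvalues i with hmu
  set dm := ⨅ k : Fin n, d (k : ℕ) with hdm
  have ha' : ∀ j, j < n → a j ≠ 0 := fun j hj => (ha j hj).ne'
  have hds := d_pos_and_sum n a b d ha hb hd1 hdk
  obtain ⟨k₀, -, hk₀⟩ := Finset.exists_min_image Finset.univ (fun k : Fin n => d (k : ℕ))
    ⟨⟨0, hn⟩, Finset.mem_univ _⟩
  have hdmle : ∀ k : Fin n, dm ≤ d (k : ℕ) := fun k =>
    ciInf_le ((Set.finite_range _).bddBelow) k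
  have hdmeq : dm = d (k₀ : ℕ) :=
    le_antisymm (hdmle k₀) (le_ciInf fun k => hk₀ k (Finset.mem_univ k))
  have hdmpos : 0 < dm := hdmeq ▸ (hds _ k₀.isLt).1
  -- Fin-indexed sum of squares of yvec
  have hyfin : ∀ k : Fin n, (∑ i : Fin n, (yvec a b (k : ℕ) (i : ℕ)) ^ 2) = 1 / d (k : ℕ) := by
    intro k
    rw [Fin.sum_univ_eq_sum_range (fun i => (yvec a b (k : ℕ) i) ^ 2) n,
      ← Finset.sum_subset (Finset.range_subset_range.mpr (Nat.succ_le_of_lt k.isLt))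
        (fun x _ hnx => by
          rw [yvec_of_gt a b (by simp only [Finset.mem_range] at hnx; omega : (k : ℕ) < x)]
          norm_num)]
    exact (hds _ k.isLt).2
  -- nonnegativity of μ
  have hmu_nonneg : 0 ≤ μ := by
    have hpsd : (B * Bᴴ).PosSemidef := Matrix.posSemidef_self_mul_conjTranspose B
    rw [Matrix.conjTranspose_eq_transpose_of_trivial] at hpsd
    exact le_ciInf fun i => hpsd.eigenvalues_nonneg i
  -- single-entry extraction
  have hsingle : ∀ (k : Fin n) (w : Fin n → ℝ),
      (fun i : Fin n => if (i : ℕ) = (k : ℕ) then (1:ℝ) else 0) ⬝ᵥ w = w k := by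
    intro k w
    have hterm : ∀ i : Fin n, (if (i : ℕ) = (k : ℕ) then (1:ℝ) else 0) * w i
        = if (i : ℕ) = (k : ℕ) then w i else 0 := by
      intro i; rw [ite_mul, one_mul, zero_mul]
    rw [dotProduct, Finset.sum_congr rfl (fun (i : Fin n) _ => hterm i),
      sum_ite_nat_eq, dif_pos k.isLt]
  -- upper bound: μ ≤ d k for each k
  have hupper : ∀ k : Fin n, μ ≤ d (k : ℕ) := by
    intro k
    have hdkpos := (hds _ k.isLt).1
    set y : Fin n → ℝ := fun i => yvec a b (k : ℕ) (i : ℕ) with hy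
    set v : Fin n → ℝ := fun i => vvec a b (k : ℕ) (i : ℕ) with hv
    have h1 : B *ᵥ y = fun i : Fin n => if (i : ℕ) = (k : ℕ) then 1 else 0 :=
      mulVec_yvec a b ha' _ k.isLt
    have h2 : Bᵀ *ᵥ v = y := transpose_mulVec_vvec a b ha' _
    have hyy : y ⬝ᵥ y = 1 / d (k : ℕ) := by
      rw [dotProduct, Finset.sum_congr rfl (fun (i : Fin n) _ => (sq (y i)).symm)]
      exact hyfin k
    have hvB : v ᵥ* B = y := by
      rw [← h2, ← Matrix.transpose_transpose B, Matrix.vecMul_transpose,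
        Matrix.transpose_transpose]
    have hvMv : v ⬝ᵥ ((B * Bᵀ) *ᵥ v) = 1 / d (k : ℕ) := by
      rw [← mulVec_mulVec, h2, dotProduct_mulVec, hvB, hyy]
    have hvkval : v k = 1 / d (k : ℕ) := by
      rw [← hsingle k v, ← h1, dotProduct_comm, dotProduct_mulVec, hvB, hyy]
    have hvk : (1 / d (k : ℕ)) ^ 2 ≤ v ⬝ᵥ v := by
      rw [← hvkval, dotProduct,
        Finset.sum_congr rfl (fun (i : Fin n) _ => (sq (v i)).symm)]
      exact Finset.single_le_sum (f := fun i => v i ^ 2)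
        (fun i _ => sq_nonneg _) (Finset.mem_univ k)
    have hray := rayleigh_lower hn hM v
    have h3 : μ * (1 / d (k : ℕ)) ^ 2 ≤ 1 / d (k : ℕ) :=
      le_trans (mul_le_mul_of_nonneg_left hvk hmu_nonneg) (le_of_le_of_eq hray hvMv)
    calc μ = μ * (1 / d (k : ℕ)) ^ 2 * (d (k : ℕ)) ^ 2 := by field_simp
    _ ≤ (1 / d (k : ℕ)) * (d (k : ℕ)) ^ 2 :=
        mul_le_mul_of_nonneg_right h3 (sq_nonneg _)
    _ = d (k : ℕ) := by field_simp [hdkpos.ne']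
  have hupper' : μ ≤ dm := hdmeq ▸ hupper k₀
  -- lower bound
  obtain ⟨i₀, -, hi₀⟩ := Finset.exists_min_image Finset.univ hM.eigenvalues
    ⟨⟨0, hn⟩, Finset.mem_univ _⟩
  have hmueq : μ = hM.eigenvalues i₀ :=
    le_antisymm (ciInf_le ((Set.finite_range _).bddBelow) i₀)
      (le_ciInf fun j => hi₀ j (Finset.mem_univ j))
  set u : Fin n → ℝ := ⇑(hM.eigenvectorBasis i₀) with hu
  have huu : u ⬝ᵥ u = 1 := by
    have hnorm : ‖hM.eigenvectorBasis i₀‖ = 1 := hM.eigenvectorBasis.orthonormal.1 i₀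
    have hinner : (inner ℝ (hM.eigenvectorBasis i₀) (hM.eigenvectorBasis i₀) : ℝ) = 1 := by
      rw [real_inner_self_eq_norm_mul_norm, hnorm, mul_one]
    rw [PiLp.inner_apply] at hinner
    simp only [RCLike.inner_apply, starRingEnd_apply, star_trivial] at hinner
    exact hinner
  have hMu : (B * Bᵀ) *ᵥ u = μ • u := by rw [hmueq]; exact hM.mulVec_eigenvectorBasis i₀
  have hmuval : u ⬝ᵥ ((B * Bᵀ) *ᵥ u) = μ := by
    rw [hMu, dotProduct_smul, huu, smul_eq_mul, mul_one]
  set z : Fin n → ℝ := Bᵀ *ᵥ u with hzdef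
  have hzz : z ⬝ᵥ z = μ := by
    calc z ⬝ᵥ z = (z ᵥ* Bᵀ) ⬝ᵥ u := by rw [hzdef, dotProduct_mulVec]
    _ = (B *ᵥ z) ⬝ᵥ u := by rw [vecMul_transpose]
    _ = u ⬝ᵥ (B *ᵥ (Bᵀ *ᵥ u)) := by rw [dotProduct_comm, hzdef]
    _ = u ⬝ᵥ ((B * Bᵀ) *ᵥ u) := by rw [mulVec_mulVec]
    _ = μ := hmuval
  have hentry : ∀ i : Fin n, u i = (fun j : Fin n => yvec a b (i : ℕ) (j : ℕ)) ⬝ᵥ z := by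
    intro i
    have h1 : B *ᵥ (fun j : Fin n => yvec a b (i : ℕ) (j : ℕ))
        = fun j : Fin n => if (j : ℕ) = (i : ℕ) then 1 else 0 :=
      mulVec_yvec a b ha' _ i.isLt
    have huB : u ᵥ* B = Bᵀ *ᵥ u := by
      rw [← Matrix.transpose_transpose B, Matrix.vecMul_transpose, Matrix.transpose_transpose]
    rw [← hsingle i u, ← h1, dotProduct_comm, dotProduct_mulVec, huB, ← hzdef,
      dotProduct_comm]
  have hCS : ∀ i : Fin n, (u i) ^ 2 ≤ (1 / d (i : ℕ)) * μ := by
    intro i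
    rw [hentry i]
    have := Finset.sum_mul_sq_le_sq_mul_sq Finset.univ
      (fun j : Fin n => yvec a b (i : ℕ) (j : ℕ)) z
    rw [hyfin i] at this
    have hzsq : (∑ j, z j ^ 2) = μ := by
      rw [← hzz, dotProduct]
      exact Finset.sum_congr rfl fun j _ => sq (z j)
    rw [hzsq] at this
    exact this
  have hsum : (1 : ℝ) ≤ (n : ℝ) * ((1 / dm) * μ) := by
    calc (1 : ℝ) = u ⬝ᵥ u := huu.symm
    _ = ∑ i, (u i) ^ 2 := by
        rw [dotProduct]; exact Finset.sum_congr rfl fun i _ => (sq (u i)).symm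
    _ ≤ ∑ _i : Fin n, (1 / dm) * μ := Finset.sum_le_sum fun i _ =>
        le_trans (hCS i) (mul_le_mul_of_nonneg_right
          (one_div_le_one_div_of_le hdmpos (hdmle i)) hmu_nonneg)
    _ = (n : ℝ) * ((1 / dm) * μ) := by
        rw [Finset.sum_const, Finset.card_univ, Fintype.card_fin, nsmul_eq_mul]
  have hnR : (0 : ℝ) < n := Nat.cast_pos.mpr hn
  have hlow : dm ≤ (n : ℝ) * μ := by
    calc dm = dm * 1 := (mul_one dm).symm
    _ ≤ dm * ((n : ℝ) * ((1 / dm) * μ)) := mul_le_mul_of_nonneg_left hsum hdmpos.le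
    _ = (n : ℝ) * μ := by field_simp
  refine ⟨?_, hupper', hlow⟩
  have h5 : (1 / (n : ℝ)) * dm ≤ (1 / (n : ℝ)) * ((n : ℝ) * μ) :=
    mul_le_mul_of_nonneg_left hlow (by positivity)
  calc (1 / (n : ℝ)) * dm ≤ (1 / (n : ℝ)) * ((n : ℝ) * μ) := h5
  _ = μ := by field_simp
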